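/- Suppose every finite weakly-top group W with Z(W) ≤ W' satisfies |W : W'| ≥ |W|^δ for some fixed δ > 0. Then every finite weakly-top group G satisfies |G : G'| ≥ |G|^{δ/(1+δ)}. -/

import Mathlib

open Subgroup

lemma cardAb_mul_cardComm (H : Type*) [Group H] :
    Nat.card (Abelianization H) * Nat.card (commutator H) = Nat.card H :=
  (Subgroup.card_eq_card_quotient_mul_card_subgroup (commutator H)).symm

lemma ab3 {H G : Type*} [Group H] [Group G] [Finite H] [Finite G] (f : H →* G)
    (hf : Function.Surjective f) :
    Nat.card (Abelianization G) * Nat.card f.ker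
      = Nat.card (Abelianization H) * Nat.card ↥(commutator H ⊓ f.ker) := by
  have h1 := cardAb_mul_cardComm G
  have h2 := cardAb_mul_cardComm H
  have h3 : Nat.card G * Nat.card f.ker = Nat.card H := by
    rw [Subgroup.card_eq_card_quotient_mul_card_subgroup f.ker]
    congr 1
    exact Nat.card_congr (QuotientGroup.quotientKerEquivOfSurjective f hf).toEquiv.symm
  have hmap : (commutator H).map f = commutator G := by
    rw [_root_.commutator_def, Subgroup.map_commutator, Subgroup.map_top_of_surjective f hf,
      commutator_def]
  have h4 : Nat.card (commutator G) * Nat.card ↥(commutator H ⊓ f.ker)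
      = Nat.card (commutator H) := by
    have e1 : Nat.card ↥(commutator H)
        = Nat.card (↥(commutator H) ⧸ (f.domRestrict (commutator H)).ker)
          * Nat.card (f.domRestrict (commutator H)).ker :=
      Subgroup.card_eq_card_quotient_mul_card_subgroup _
    have e2 : Nat.card (↥(commutator H) ⧸ (f.domRestrict (commutator H)).ker)
        = Nat.card (commutator G) := by
      rw [← hmap]
      refine Nat.card_congr ?_
      exact ((QuotientGroup.quotientKerEquivRange (f.domRestrict (commutator H))).trans
        (MulEquiv.subgroupCongr (MonoidHom.restrict_range (commutator H) f))).toEquiv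
    have e3 : Nat.card (f.domRestrict (commutator H)).ker
        = Nat.card ↥(commutator H ⊓ f.ker) := by
      rw [MonoidHom.ker_restrict]
      refine Nat.card_congr ?_
      have : f.ker.subgroupOf (commutator H) = (commutator H ⊓ f.ker).subgroupOf (commutator H) := by
        rw [eq_comm]
        exact Subgroup.inf_subgroupOf_left _ _
      rw [this]
      exact (Subgroup.subgroupOfEquivOfLe inf_le_left).toEquiv
    rw [e2, e3] at e1
    exact e1.symm
  -- arithmetic
  have hC : 0 < Nat.card (commutator H) := Nat.card_pos
  have key : (Nat.card (Abelianization G) * Nat.card f.ker) * Nat.card (commutator H)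
      = (Nat.card (Abelianization H) * Nat.card ↥(commutator H ⊓ f.ker))
        * Nat.card (commutator H) := by
    calc (Nat.card (Abelianization G) * Nat.card f.ker) * Nat.card (commutator H)
        = (Nat.card (Abelianization G) * Nat.card (commutator G)) * Nat.card f.ker
            * Nat.card ↥(commutator H ⊓ f.ker) := by rw [← h4]; ring
      _ = Nat.card H * Nat.card ↥(commutator H ⊓ f.ker) := by rw [h1, h3]
      _ = (Nat.card (Abelianization H) * Nat.card ↥(commutator H ⊓ f.ker))
            * Nat.card (commutator H) := by rw [← h2]; ring
  exact Nat.eq_of_mul_eq_mul_right hC key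

lemma ab2 {H G : Type*} [Group H] [Group G] [Finite H] [Finite G] (f : H →* G)
    (hf : Function.Surjective f) (hdisj : commutator H ⊓ f.ker = ⊥) :
    Nat.card (Abelianization G) * Nat.card f.ker = Nat.card (Abelianization H) := by
  have := ab3 f hf
  rw [hdisj] at this
  simpa using this

lemma ab1 {H G : Type*} [Group H] [Group G] [Finite H] [Finite G] (f : H →* G) :
    Nat.card (Abelianization H) ≤ Nat.card f.ker * Nat.card (Abelianization ↥f.range) := by
  have h := ab3 f.rangeRestrict f.rangeRestrict_surjective
  rw [MonoidHom.ker_rangeRestrict] at h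
  have hpos : 1 ≤ Nat.card ↥(commutator H ⊓ f.ker) := Nat.card_pos
  calc Nat.card (Abelianization H)
      ≤ Nat.card (Abelianization H) * Nat.card ↥(commutator H ⊓ f.ker) :=
        Nat.le_mul_of_pos_right _ hpos
    _ = Nat.card (Abelianization ↥f.range) * Nat.card f.ker := h.symm
    _ = Nat.card f.ker * Nat.card (Abelianization ↥f.range) := Nat.mul_comm _ _
open Subgroup

lemma ext_step {Z V : Type} [CommGroup Z] [CommGroup V] [Finite Z] [Finite V]
    (π : Z →* V) (hns : ¬ Function.Surjective π) :
    ∃ (Z' : Type) (_ : CommGroup Z') (_ : Finite Z') (ι : Z →* Z') (π' : Z' →* V),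
      Function.Injective ι ∧ π'.comp ι = π ∧
      Nat.card π.range < Nat.card π'.range ∧
      (∀ e ∈ π'.ker, ∃ z ∈ π.ker, ι z = e) := by
  obtain ⟨v, hv⟩ : ∃ v, v ∉ π.range := by
    by_contra h
    push_neg at h
    exact hns fun x => (π.mem_range).mp (h x)
  set Q := V ⧸ π.range with hQ
  set n : ℕ := orderOf (QuotientGroup.mk v : Q) with hn
  have hn0 : 0 < n := orderOf_pos _
  have hvn : v ^ n ∈ π.range := by
    have h1 : (QuotientGroup.mk v : Q) ^ n = 1 := pow_orderOf_eq_one _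
    have h2 : (QuotientGroup.mk (v ^ n) : Q) = 1 := by
      rw [← h1]; rfl
    exact (QuotientGroup.eq_one_iff _).mp h2
  obtain ⟨z₀, hz₀⟩ := hvn
  set κ : Z × Multiplicative ℤ := (z₀⁻¹, Multiplicative.ofAdd (n : ℤ)) with hκ
  set K : Subgroup (Z × Multiplicative ℤ) := Subgroup.zpowers κ with hK
  have hκpow : ∀ m : ℤ, κ ^ m = (z₀ ^ (-m), Multiplicative.ofAdd ((n : ℤ) * m)) := by
    intro m
    have h1 : κ ^ m = (κ.1 ^ m, κ.2 ^ m) := rfl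
    rw [h1, hκ]
    refine Prod.ext ?_ ?_
    · show (z₀⁻¹) ^ m = z₀ ^ (-m)
      rw [inv_zpow, zpow_neg]
    · show (Multiplicative.ofAdd ((n:ℤ))) ^ m = Multiplicative.ofAdd ((n : ℤ) * m)
      apply Multiplicative.toAdd.injective
      simp [toAdd_zpow, mul_comm]
  set Z' := (Z × Multiplicative ℤ) ⧸ K with hZ'
  set ι : Z →* Z' := (QuotientGroup.mk' K).comp (MonoidHom.inl Z (Multiplicative ℤ)) with hι
  set f : (Z × Multiplicative ℤ) →* V :=
    (π.comp (MonoidHom.fst Z (Multiplicative ℤ)))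
      * ((zpowersHom V v).comp (MonoidHom.snd Z (Multiplicative ℤ))) with hf
  have hfap : ∀ z t, f (z, t) = π z * v ^ (Multiplicative.toAdd t) := by
    intro z t; simp [hf]
  have hKker : K ≤ f.ker := by
    rw [hK, Subgroup.zpowers_le, MonoidHom.mem_ker, hκ, hfap, map_inv, hz₀]
    rw [toAdd_ofAdd, zpow_natCast]
    group
  set π' : Z' →* V := QuotientGroup.lift K f hKker with hπ'
  have hcomp : π'.comp ι = π := by
    ext z
    show f (z, 1) = π z
    rw [hfap]; simp
  have hmemK : ∀ x : Z × Multiplicative ℤ, x ∈ K ↔ ∃ m : ℤ, κ ^ m = x := by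
    intro x; exact Subgroup.mem_zpowers_iff
  have hιinj : Function.Injective ι := by
    intro a b hab
    have : ((a, (1:Multiplicative ℤ)) : Z × Multiplicative ℤ)⁻¹ * (b, 1) ∈ K := by
      rw [← QuotientGroup.eq]
      exact hab
    obtain ⟨m, hm⟩ := (hmemK _).mp this
    rw [hκpow] at hm
    have h2 : Multiplicative.ofAdd ((n : ℤ) * m) = 1 := by
      have := congrArg Prod.snd hm
      simpa using this
    have hm0 : m = 0 := by
      have hnm := congrArg Multiplicative.toAdd h2
      simp at hnm
      rcases hnm with h | h
      · exact h
      · exact absurd h (by exact_mod_cast hn0.ne')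
    have h3 : (1 : Z) = a⁻¹ * b := by
      have h4 := congrArg Prod.fst hm
      rw [hm0] at h4
      simpa using h4
    rw [eq_comm, inv_mul_eq_one] at h3
    exact h3
  have hrange : Nat.card π.range < Nat.card π'.range := by
    have hle : π.range ≤ π'.range := by
      intro x ⟨z, hz⟩
      exact ⟨ι z, by rw [← hz, ← hcomp]; rfl⟩
    have hvmem : v ∈ π'.range := by
      refine ⟨QuotientGroup.mk (1, Multiplicative.ofAdd (1 : ℤ)), ?_⟩
      show f (1, Multiplicative.ofAdd (1:ℤ)) = v
      rw [hfap]; simp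
    by_contra hcon
    push_neg at hcon
    have := Subgroup.eq_of_le_of_card_ge hle hcon
    rw [this] at hv
    exact hv hvmem
  have hfin : Finite Z' := by
    have hs : Function.Surjective (fun zj : Z × Fin n =>
        (QuotientGroup.mk (zj.1, Multiplicative.ofAdd ((zj.2 : ℕ) : ℤ)) : Z')) := by
      intro x
      induction x using QuotientGroup.induction_on with
      | H pp =>
        obtain ⟨z, t⟩ := pp
        set a : ℤ := Multiplicative.toAdd t with ha
        have hmodlt : a % (n : ℤ) < n := Int.emod_lt_of_pos a (by exact_mod_cast hn0)
        have hmodnn : 0 ≤ a % (n : ℤ) := Int.emod_nonneg a (by exact_mod_cast hn0.ne')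
        refine ⟨⟨z * z₀ ^ (a / (n : ℤ)), ⟨(a % (n : ℤ)).toNat, by omega⟩⟩, ?_⟩
        show (QuotientGroup.mk _ : Z') = QuotientGroup.mk _
        rw [QuotientGroup.eq]
        refine (hmemK _).mpr ⟨a / (n : ℤ), ?_⟩
        rw [hκpow]
        have hcast : (((a % (n : ℤ)).toNat : ℕ) : ℤ) = a % (n : ℤ) := Int.toNat_of_nonneg hmodnn
        have hemod : a % (n : ℤ) = a - (n : ℤ) * (a / (n : ℤ)) := Int.emod_def a (n : ℤ)
        ext
        · show z₀ ^ (-(a / (n : ℤ))) = (z * z₀ ^ (a / (n : ℤ)))⁻¹ * z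
          rw [mul_inv, mul_comm, ← mul_assoc]
          rw [zpow_neg]
          group
        · show Multiplicative.ofAdd ((n : ℤ) * (a / (n : ℤ)))
            = (Multiplicative.ofAdd (((a % (n : ℤ)).toNat : ℕ) : ℤ))⁻¹ * t
          have : t = Multiplicative.ofAdd a := rfl
          rw [this, hcast]
          rw [← ofAdd_neg, ← ofAdd_add]
          congr 1
          omega
    exact Finite.of_surjective _ hs
  have hkerc : ∀ e ∈ π'.ker, ∃ z ∈ π.ker, ι z = e := by
    intro x hx
    induction x using QuotientGroup.induction_on with
    | H pp =>
      obtain ⟨z, t⟩ := pp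
      set a : ℤ := Multiplicative.toAdd t with ha
      have hfx : π z * v ^ a = 1 := by
        have : f (z, t) = 1 := hx
        rwa [hfap] at this
      have hva : (QuotientGroup.mk v : Q) ^ a = 1 := by
        rw [← QuotientGroup.mk_zpow, QuotientGroup.eq_one_iff]
        have : v ^ a = (π z)⁻¹ := by
          rw [eq_inv_iff_mul_eq_one, mul_comm]; exact hfx
        rw [this]
        exact π.range.inv_mem ⟨z, rfl⟩
      have hdvd : (n : ℤ) ∣ a := by
        rw [hn]
        exact orderOf_dvd_iff_zpow_eq_one.mpr hva
      obtain ⟨m, hm⟩ := hdvd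
      refine ⟨z * z₀ ^ m, ?_, ?_⟩
      · rw [MonoidHom.mem_ker, map_mul, map_zpow, hz₀]
        rw [← zpow_natCast v n, ← zpow_mul, ← hm]
        exact hfx
      · show (QuotientGroup.mk (z * z₀ ^ m, 1) : Z') = QuotientGroup.mk (z, t)
        rw [QuotientGroup.eq]
        refine (hmemK _).mpr ⟨m, ?_⟩
        rw [hκpow]
        ext
        · show z₀ ^ (-m) = (z * z₀ ^ m)⁻¹ * z
          rw [mul_inv, mul_comm, ← mul_assoc, zpow_neg]
          group
        · show Multiplicative.ofAdd ((n : ℤ) * m) = 1⁻¹ * t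
          have : t = Multiplicative.ofAdd a := rfl
          rw [this, hm]
          simp
  exact ⟨Z', inferInstance, hfin, ι, π', hιinj, hcomp, hrange, hkerc⟩

lemma ext_extend (k : ℕ) :
    ∀ (Z V : Type) [CommGroup Z] [CommGroup V] [Finite Z] [Finite V]
    (π : Z →* V), Nat.card V ≤ Nat.card π.range + k →
    ∃ (E : Type) (_ : CommGroup E) (_ : Finite E) (ι : Z →* E) (p : E →* V),
      Function.Injective ι ∧ Function.Surjective p ∧ p.comp ι = π ∧
      (∀ e ∈ p.ker, ∃ z ∈ π.ker, ι z = e) := by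
  induction k with
  | zero =>
    intro Z V _ _ _ _ π hk
    have : π.range = ⊤ := Subgroup.eq_top_of_le_card _ (by simpa using hk)
    refine ⟨Z, inferInstance, inferInstance, MonoidHom.id Z, π, fun a b h => h,
      MonoidHom.range_eq_top.mp this, π.comp_id, fun e he => ⟨e, he, rfl⟩⟩
  | succ k ih =>
    intro Z V _ _ _ _ π hk
    by_cases hs : Function.Surjective π
    · exact ⟨Z, inferInstance, inferInstance, MonoidHom.id Z, π, fun a b h => h,
        hs, π.comp_id, fun e he => ⟨e, he, rfl⟩⟩
    · obtain ⟨Z', instZ', finZ', ι₀, π', hι₀, hcomp₀, hlt, hker₀⟩ := ext_step π hs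
      obtain ⟨E, instE, finE, ι₁, p, hι₁, hps, hcomp₁, hker₁⟩ :=
        ih Z' V π' (by omega)
      refine ⟨E, instE, finE, ι₁.comp ι₀, p, hι₁.comp hι₀, hps, ?_, ?_⟩
      · rw [← MonoidHom.comp_assoc, hcomp₁, hcomp₀]
      · intro e he
        obtain ⟨z', hz', hz'e⟩ := hker₁ e he
        obtain ⟨z, hz, hzz'⟩ := hker₀ z' hz'
        exact ⟨z, hz, by rw [MonoidHom.comp_apply, hzz', hz'e]⟩

def IsWeaklyTop (G : Type*) [Group G] : Prop :=
  ∀ H : Subgroup G, Nat.card (Abelianization H) ≤ Nat.card (Abelianization G)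

open scoped IsMulCommutative commutatorElement in
lemma exists_good_W (G : Type) [Group G] [Finite G] (hwt : IsWeaklyTop G) :
    ∃ (W : Type) (_ : Group W) (_ : Finite W),
      Subgroup.center W ≤ commutator W ∧ IsWeaklyTop W ∧
      Nat.card (commutator G) ≤ Nat.card W ∧
      Nat.card (Abelianization W) ≤ Nat.card (Abelianization G) := by
  classical
  set πG : G →* Abelianization G := Abelianization.of with hπG
  have hkerπG : πG.ker = commutator G := by
    ext x
    rw [MonoidHom.mem_ker]
    exact QuotientGroup.eq_one_iff x
  set Zc := Subgroup.center G with hZc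
  set πZ : ↥Zc →* Abelianization G := πG.comp Zc.subtype with hπZ
  obtain ⟨E, instE, finE, ι, p, hιinj, hpsurj, hcomp, hker⟩ :=
    ext_extend (Nat.card (Abelianization G)) ↥Zc (Abelianization G) πZ (Nat.le_add_left _ _)
  set φ : G × E →* Abelianization G :=
    (πG.comp (MonoidHom.fst G E)) * ((p.comp (MonoidHom.snd G E)))⁻¹ with hφ
  set X : Subgroup (G × E) := φ.ker with hX
  have memX : ∀ x : G × E, x ∈ X ↔ πG x.1 = p x.2 := by
    intro x
    rw [hX, MonoidHom.mem_ker, hφ]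
    rw [MonoidHom.mul_apply, MonoidHom.inv_apply, mul_inv_eq_one]
    rfl
  set ρ₁ : ↥X →* G := (MonoidHom.fst G E).comp X.subtype with hρ₁
  set ρ₂ : ↥X →* E := (MonoidHom.snd G E).comp X.subtype with hρ₂
  have hρ₁surj : Function.Surjective ρ₁ := by
    intro g
    obtain ⟨e, he⟩ := hpsurj (πG g)
    exact ⟨⟨(g, e), (memX _).mpr he.symm⟩, rfl⟩
  have hsndX : ∀ x : ↥X, x ∈ commutator ↥X → ((x : G × E)).2 = 1 := by
    intro x hx
    exact Abelianization.commutator_subset_ker ρ₂ hx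
  have hνmem : ∀ z : ↥Zc, (((z : G), ι z) : G × E) ∈ X := by
    intro z
    rw [memX]
    have h1 : p (ι z) = πZ z := by rw [← hcomp]; rfl
    rw [h1, hπZ]
    rfl
  set ν : ↥Zc →* ↥X :=
    { toFun := fun z => ⟨(((z : G)), ι z), hνmem z⟩
      map_one' := by
        apply Subtype.ext
        apply Prod.ext <;> simp
      map_mul' := by
        intro a b
        apply Subtype.ext
        apply Prod.ext <;> simp } with hν
  have hνinj : Function.Injective ν := by
    intro a b hab
    have := congrArg (fun x : ↥X => ((x : G × E)).1) hab
    exact Subtype.ext this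
  set N : Subgroup ↥X := ν.range with hN
  have hNmem : ∀ x : ↥X, x ∈ N ↔ ∃ z : ↥Zc, ν z = x := fun x => Iff.rfl
  have hNcard : Nat.card N = Nat.card ↥Zc :=
    (Nat.card_congr (MonoidHom.ofInjective hνinj).toEquiv).symm
  have hNle : N ≤ Subgroup.center ↥X := by
    rintro _ ⟨z, rfl⟩
    rw [Subgroup.mem_center_iff]
    intro y
    apply Subtype.ext
    apply Prod.ext
    · exact Subgroup.mem_center_iff.mp z.2 _
    · exact mul_comm _ _
  haveI hNnormal : N.Normal := by
    constructor
    intro x hx g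
    have hc := Subgroup.mem_center_iff.mp (hNle hx) g
    have hgx : g * x * g⁻¹ = x := by rw [hc, mul_assoc, mul_inv_cancel, mul_one]
    rwa [hgx]
  set W := ↥X ⧸ N with hW
  set mkW : ↥X →* W := QuotientGroup.mk' N with hmkW
  have hmkWsurj : Function.Surjective mkW := QuotientGroup.mk'_surjective N
  -- disjointness of N with the commutator subgroup of X
  have hNdisj : ∀ x : ↥X, ((x : G × E)).2 = 1 → x ∈ N → x = 1 := by
    intro x hsnd hxN
    obtain ⟨z, hz⟩ := hxN
    have hz1 : ι z = 1 := by
      have := congrArg (fun w : ↥X => ((w : G × E)).2) hz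
      exact this.trans hsnd
    have hz0 : z = 1 := hιinj (by rw [hz1, map_one])
    rw [hz0, map_one] at hz
    exact hz.symm
  have hdisjX : commutator ↥X ⊓ N = ⊥ := by
    rw [eq_bot_iff]
    intro x hx
    rw [Subgroup.mem_inf] at hx
    rw [Subgroup.mem_bot]
    exact hNdisj x (hsndX x hx.1) hx.2
  have hdisjρ₁ : commutator ↥X ⊓ ρ₁.ker = ⊥ := by
    rw [eq_bot_iff]
    intro x hx
    rw [Subgroup.mem_inf] at hx
    rw [Subgroup.mem_bot]
    apply Subtype.ext
    apply Prod.ext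
    · exact hx.2
    · exact hsndX x hx.1
  have hkerρ₁ : Nat.card ρ₁.ker = Nat.card p.ker := by
    have toMem : ∀ x : ρ₁.ker, (((x : ↥X) : G × E)).2 ∈ p.ker := by
      intro x
      have hx1 : (((x : ↥X) : G × E)).1 = 1 := MonoidHom.mem_ker.mp x.2
      have h2 := (memX _).mp (x : ↥X).2
      rw [hx1, map_one] at h2
      exact MonoidHom.mem_ker.mpr h2.symm
    have invmem : ∀ e : p.ker, (((1 : G), (e : E)) : G × E) ∈ X := by
      intro e
      rw [memX, map_one]
      exact (MonoidHom.mem_ker.mp e.2).symm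
    have invker : ∀ e : p.ker, (⟨((1 : G), (e : E)), invmem e⟩ : ↥X) ∈ ρ₁.ker := by
      intro e
      exact MonoidHom.mem_ker.mpr rfl
    refine Nat.card_congr ⟨fun x => ⟨(((x : ↥X) : G × E)).2, toMem x⟩,
      fun e => ⟨⟨((1 : G), (e : E)), invmem e⟩, invker e⟩, fun x => ?_, fun e => rfl⟩
    apply Subtype.ext
    apply Subtype.ext
    apply Prod.ext
    · exact (MonoidHom.mem_ker.mp x.2).symm
    · rfl
  have hkzc : Nat.card p.ker ≤ Nat.card ↥Zc := by
    have hsub : (p.ker : Set E) ⊆ Set.range ι := by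
      intro e he
      obtain ⟨z, _, hz⟩ := hker e he
      exact ⟨z, hz⟩
    calc Nat.card p.ker ≤ Nat.card (Set.range ι) := Nat.card_mono (Set.toFinite _) hsub
      _ = Nat.card ↥Zc := Nat.card_range_of_injective hιinj
  -- the key counting identity
  have hW1 : Nat.card (Abelianization W) * Nat.card ↥Zc
      = Nat.card (Abelianization G) * Nat.card p.ker := by
    have e1 := ab2 mkW hmkWsurj (by rw [hmkW, QuotientGroup.ker_mk']; exact hdisjX)
    have e2 := ab2 ρ₁ hρ₁surj hdisjρ₁
    rw [hmkW, QuotientGroup.ker_mk', hNcard] at e1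
    rw [hkerρ₁] at e2
    exact e1.trans e2.symm
  have hzc0 : 0 < Nat.card ↥Zc := Nat.card_pos
  have hAbWle : Nat.card (Abelianization W) ≤ Nat.card (Abelianization G) := by
    refine Nat.le_of_mul_le_mul_right ?_ hzc0
    calc Nat.card (Abelianization W) * Nat.card ↥Zc
        = Nat.card (Abelianization G) * Nat.card p.ker := hW1
      _ ≤ Nat.card (Abelianization G) * Nat.card ↥Zc :=
          Nat.mul_le_mul_left _ hkzc
  -- commutator G embeds into W
  have hcembed : ∀ c : G, c ∈ commutator G → (((c, (1 : E))) : G × E) ∈ X := by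
    intro c hc
    rw [memX, map_one]
    exact MonoidHom.mem_ker.mp (hkerπG ▸ hc)
  have hdW : Nat.card (commutator G) ≤ Nat.card W := by
    refine Nat.card_le_card_of_injective
      (fun c : ↥(commutator G) => mkW ⟨(((c : G)), 1), hcembed _ c.2⟩) ?_
    intro c c' hcc
    have h1 : (⟨(((c : G)), 1), hcembed _ c.2⟩ : ↥X)⁻¹ * ⟨(((c' : G)), 1), hcembed _ c'.2⟩ ∈ N :=
      (QuotientGroup.eq (s := N)).mp hcc
    have h2 := hNdisj _ (by simp) h1
    have h3 := congrArg (fun x : ↥X => ((x : G × E)).1) h2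
    apply Subtype.ext
    have : ((c : G))⁻¹ * (c' : G) = 1 := h3
    rw [← inv_mul_eq_one]
    exact this
  -- W is weakly top
  have hWwt : IsWeaklyTop W := by
    intro S
    set T : Subgroup ↥X := S.comap mkW with hT
    have hNT : N ≤ T := by
      intro x hx
      rw [hT, Subgroup.mem_comap]
      have h1 : mkW x = 1 := (QuotientGroup.eq_one_iff x).mpr hx
      rw [h1]
      exact S.one_mem
    set v' : ↥T →* ↥S :=
      { toFun := fun t => ⟨mkW (t : ↥X), t.2⟩
        map_one' := by apply Subtype.ext; simp
        map_mul' := by intro a b; apply Subtype.ext; simp } with hv'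
    have hv'surj : Function.Surjective v' := by
      intro s
      obtain ⟨x, hx⟩ := hmkWsurj (s : W)
      refine ⟨⟨x, ?_⟩, Subtype.ext hx⟩
      rw [hT, Subgroup.mem_comap, hx]
      exact s.2
    have hv'ker : Nat.card v'.ker = Nat.card ↥Zc := by
      rw [← hNcard]
      refine Nat.card_congr ⟨fun t => ⟨((t : ↥T) : ↥X), ?_⟩,
        fun n => ⟨⟨(n : ↥X), hNT n.2⟩, ?_⟩, fun t => ?_, fun n => rfl⟩
      · have h1 : mkW ((t : ↥T) : ↥X) = 1 :=
          congrArg Subtype.val (MonoidHom.mem_ker.mp t.2)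
        exact (QuotientGroup.eq_one_iff _).mp h1
      · refine MonoidHom.mem_ker.mpr ?_
        apply Subtype.ext
        show mkW (n : ↥X) = 1
        exact (QuotientGroup.eq_one_iff _).mpr n.2
      · apply Subtype.ext
        apply Subtype.ext
        rfl
    have hdisjT : commutator ↥T ⊓ v'.ker = ⊥ := by
      rw [eq_bot_iff]
      intro t ht
      rw [Subgroup.mem_inf] at ht
      rw [Subgroup.mem_bot]
      have hsnd : (((t : ↥X) : G × E)).2 = 1 :=
        Abelianization.commutator_subset_ker (ρ₂.comp T.subtype) ht.1
      have hmem : (t : ↥X) ∈ N := by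
        have h1 : mkW (t : ↥X) = 1 := congrArg Subtype.val ht.2
        exact (QuotientGroup.eq_one_iff _).mp h1
      have := hNdisj _ hsnd hmem
      exact Subtype.ext this
    have e3 := ab2 v' hv'surj hdisjT
    set h' : ↥T →* G := ρ₁.comp T.subtype with hh'
    have e4 := ab1 h'
    have hkerh' : Nat.card h'.ker ≤ Nat.card p.ker := by
      refine Nat.card_le_card_of_injective (fun t => (⟨(((t.1 : ↥X)) : G × E).2, ?_⟩ : p.ker)) ?_
      · have hfst : (((t.1 : ↥X)) : G × E).1 = 1 := t.2
        have h2 := (memX _).mp (t.1 : ↥X).2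
        rw [hfst, map_one] at h2
        exact MonoidHom.mem_ker.mpr h2.symm
      · intro t t' htt
        have h3 : ((((t.1 : ↥X)) : G × E)).2 = ((((t'.1 : ↥X)) : G × E)).2 :=
          congrArg Subtype.val htt
        apply Subtype.ext
        apply Subtype.ext
        apply Subtype.ext
        apply Prod.ext
        · exact (MonoidHom.mem_ker.mp t.2).trans (MonoidHom.mem_ker.mp t'.2).symm
        · exact h3
    have hrange_le := hwt h'.range
    rw [hv'ker] at e3
    refine Nat.le_of_mul_le_mul_right ?_ hzc0
    calc Nat.card (Abelianization ↥S) * Nat.card ↥Zc = Nat.card (Abelianization ↥T) := e3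
      _ ≤ Nat.card h'.ker * Nat.card (Abelianization ↥h'.range) := e4
      _ ≤ Nat.card p.ker * Nat.card (Abelianization G) :=
          Nat.mul_le_mul hkerh' hrange_le
      _ = Nat.card (Abelianization G) * Nat.card p.ker := Nat.mul_comm _ _
      _ = Nat.card (Abelianization W) * Nat.card ↥Zc := hW1.symm
  -- the center of W is inside its commutator subgroup
  have hcommW : (commutator ↥X).map mkW = commutator W := by
    rw [_root_.commutator_def, Subgroup.map_commutator,
      Subgroup.map_top_of_surjective mkW hmkWsurj, _root_.commutator_def]
  have hmapρ₁ : (commutator ↥X).map ρ₁ = commutator G := by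
    rw [_root_.commutator_def, Subgroup.map_commutator,
      Subgroup.map_top_of_surjective ρ₁ hρ₁surj, _root_.commutator_def]
  have hZWle : Subgroup.center W ≤ commutator W := by
    intro w hw
    obtain ⟨x, rfl⟩ := hmkWsurj w
    have hg : ((x : G × E)).1 ∈ Subgroup.center G := by
      rw [Subgroup.mem_center_iff]
      intro g
      obtain ⟨y, hy⟩ := hρ₁surj g
      have h1 : mkW ⁅x, y⁆ = 1 := by
        rw [map_commutatorElement, commutatorElement_eq_one_iff_mul_comm]
        exact (Subgroup.mem_center_iff.mp hw (mkW y)).symm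
      have h2 : ⁅x, y⁆ ∈ N := (QuotientGroup.eq_one_iff _).mp h1
      have hsnd2 : ((⁅x, y⁆ : ↥X) : G × E).2 = 1 := by
        show ⁅((x : G × E)).2, ((y : G × E)).2⁆ = 1
        rw [commutatorElement_eq_one_iff_mul_comm]
        exact mul_comm _ _
      have h4 : ⁅x, y⁆ = 1 := hNdisj _ hsnd2 h2
      have h5 : ⁅((x : G × E)).1, ((y : G × E)).1⁆ = 1 :=
        congrArg (fun w : ↥X => ((w : G × E)).1) h4
      have hy' : ((y : G × E)).1 = g := hy
      rw [hy'] at h5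
      exact (commutatorElement_eq_one_iff_mul_comm.mp h5).symm
    set g : G := ((x : G × E)).1 with hgdef
    set e : E := ((x : G × E)).2 with hedef
    have hpe : p e = πG g := ((memX _).mp x.2).symm
    set zg : ↥Zc := ⟨g, hg⟩ with hzg
    have h5 : e * (ι zg)⁻¹ ∈ p.ker := by
      rw [MonoidHom.mem_ker, map_mul, map_inv]
      have h6 : p (ι zg) = πG g := by
        have h7 := DFunLike.congr_fun hcomp zg
        exact h7
      rw [hpe, h6, mul_inv_cancel]
    obtain ⟨z, hzker, hze⟩ := hker _ h5
    have he : ι (z * zg) = e := by rw [map_mul, hze]; group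
    set u : ↥Zc := z * zg with hu
    have hzG : (z : G) ∈ πG.ker := by
      have h7 : πZ z = 1 := hzker
      exact h7
    have hx1mem : ((((z : G))⁻¹, (1 : E)) : G × E) ∈ X := by
      rw [memX, map_inv, map_one]
      rw [MonoidHom.mem_ker.mp hzG]
      exact inv_one
    set x₁ : ↥X := ⟨(((z : G))⁻¹, 1), hx1mem⟩ with hx₁
    have hxeq : x = x₁ * ν u := by
      apply Subtype.ext
      apply Prod.ext
      · show g = ((z : G))⁻¹ * ((u : G))
        have : ((u : G)) = (z : G) * g := rfl
        rw [this, ← mul_assoc, inv_mul_cancel, one_mul]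
      · show e = 1 * ι u
        rw [one_mul, he]
    have hx₁c : x₁ ∈ commutator ↥X := by
      have hzc : ((z : G))⁻¹ ∈ commutator G :=
        (commutator G).inv_mem (hkerπG ▸ hzG)
      rw [← hmapρ₁] at hzc
      obtain ⟨x', hx'c, hx'⟩ := hzc
      have hx'snd : ((x' : G × E)).2 = 1 := hsndX x' hx'c
      have hx'eq : x' = x₁ := by
        apply Subtype.ext
        apply Prod.ext
        · exact hx'
        · exact hx'snd
      rwa [hx'eq] at hx'c
    rw [hxeq, map_mul]
    have hν1 : mkW (ν u) = 1 := (QuotientGroup.eq_one_iff _).mpr ⟨u, rfl⟩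
    rw [hν1, mul_one]
    rw [← hcommW]
    exact Subgroup.mem_map.mpr ⟨x₁, hx₁c, rfl⟩
  exact ⟨W, inferInstance, inferInstance, hZWle, hWwt, hdW, hAbWle⟩

/-- If every finite weakly-top stem group `W` (i.e. with `Z(W) ≤ W'`) satisfies
`|W : W'| ≥ |W|^δ`, then every finite weakly-top group `G` satisfies
`|G : G'| ≥ |G|^(δ/(1+δ))`. -/
theorem weakly_top_abelianization_bound (δ : ℝ) (hδ : 0 < δ)
    (hstem : ∀ (W : Type) [Group W] [Finite W],
      Subgroup.center W ≤ commutator W → IsWeaklyTop W →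
      (Nat.card W : ℝ) ^ δ ≤ (Nat.card (Abelianization W) : ℝ)) :
    ∀ (G : Type) [Group G] [Finite G], IsWeaklyTop G →
      (Nat.card G : ℝ) ^ (δ / (1 + δ)) ≤ (Nat.card (Abelianization G) : ℝ) := by
  intro G _ _ hwt
  obtain ⟨W, instW, finW, hstemW, hWwt, hdW, hAbW⟩ := exists_good_W G hwt
  have hWbound := hstem W hstemW hWwt
  set a : ℕ := Nat.card (Abelianization G) with ha
  set d : ℕ := Nat.card (commutator G) with hd
  have ha0 : 0 < a := Nat.card_pos
  have hd0 : 0 < d := Nat.card_pos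
  have ha1 : (1 : ℝ) ≤ (a : ℝ) := by exact_mod_cast ha0
  have hdR : (0 : ℝ) ≤ (d : ℝ) := Nat.cast_nonneg d
  have haR : (0 : ℝ) < (a : ℝ) := by exact_mod_cast ha0
  have hda : (d : ℝ) ^ δ ≤ (a : ℝ) := by
    calc (d : ℝ) ^ δ ≤ (Nat.card W : ℝ) ^ δ :=
          Real.rpow_le_rpow hdR (Nat.cast_le.mpr hdW) hδ.le
      _ ≤ (Nat.card (Abelianization W) : ℝ) := hWbound
      _ ≤ (a : ℝ) := Nat.cast_le.mpr hAbW
  have hn : (Nat.card G : ℝ) = (a : ℝ) * (d : ℝ) := by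
    rw [← Nat.cast_mul]
    exact_mod_cast (cardAb_mul_cardComm G).symm
  have hd_le : (d : ℝ) ≤ (a : ℝ) ^ (1 / δ) := by
    have h1 := Real.rpow_le_rpow (by positivity) hda (by positivity : (0:ℝ) ≤ 1 / δ)
    rwa [← Real.rpow_mul hdR, mul_one_div, div_self hδ.ne', Real.rpow_one] at h1
  have hn_le : (Nat.card G : ℝ) ≤ (a : ℝ) ^ ((1 + δ) / δ) := by
    rw [hn]
    calc (a : ℝ) * (d : ℝ) ≤ (a : ℝ) * (a : ℝ) ^ (1 / δ) :=
          mul_le_mul_of_nonneg_left hd_le (by positivity)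
      _ = (a : ℝ) ^ (1 + 1 / δ) := by
          rw [Real.rpow_add haR, Real.rpow_one]
      _ = (a : ℝ) ^ ((1 + δ) / δ) := by
          congr 1
          field_simp
          ring
  have hfinal := Real.rpow_le_rpow (by positivity) hn_le
    (by positivity : (0:ℝ) ≤ δ / (1 + δ))
  have hexp : ((1 + δ) / δ) * (δ / (1 + δ)) = 1 := by
    field_simp
  rwa [← Real.rpow_mul (by positivity : (0:ℝ) ≤ (a : ℝ)), hexp, Real.rpow_one] at hfinal
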